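/- Let G be a strongly connected directed simple graph on a finite vertex type V with distinguished vertex r : V. Let G' be the directed simple graph on Option V with edge relation E' defined by: E' (some a) (some b) ↔ E a b; E' (some r) none and E' none (some r) hold (the exchange with the new vertex); and there are no other edges; take none as the distinguished vertex of G'. Then there exists A' ∈ Θ_{G'} with B_{G'}(A') (with distinguished vertex none) of full column rank if and only if there exists A ∈ Θ_G with B_G(A) (with distinguished vertex r) of full column rank. -/

import Mathlib

open Matrix

attribute [local instance] Classical.propDecidable

variable {V : Type*}

/-- The parameter space `Θ_G` of a directed simple graph given by the edge
relation `E` (where `E j i` means there is an edge `j → i`): matrices whose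
off-diagonal entry `(i,j)` vanishes unless `j → i` is an edge. -/
def Theta (E : V → V → Prop) : Set (Matrix V V ℂ) :=
  {A | ∀ i j, i ≠ j → ¬ E j i → A i j = 0}

/-- The coefficient matrix `B_G(A)`: rows indexed by the non-edges
`(k,l)` (the zero positions of a generic element of `Θ_G`), columns indexed
by pairs `(i,j)` with `i ≠ j` avoiding the distinguished vertex `r`. -/
noncomputable def Bmat (E : V → V → Prop) (r : V) (A : Matrix V V ℂ) :
    Matrix {p : V × V // p.1 ≠ p.2 ∧ ¬ E p.2 p.1}
      {p : V × V // p.1 ≠ p.2 ∧ p.1 ≠ r ∧ p.2 ≠ r} ℂ :=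
  fun kl ij =>
    if ij.1.1 = kl.1.1 ∧ ij.1.2 = kl.1.2 then A kl.1.1 kl.1.1 - A kl.1.2 kl.1.2
    else if ij.1.1 = kl.1.1 then -A ij.1.2 kl.1.2
    else if ij.1.2 = kl.1.2 then A kl.1.1 ij.1.1
    else 0

/-- `B_G(A)` has full column rank `(|V|-1)(|V|-2)` for some `A ∈ Θ_G`. -/
def HasFullB [Fintype V] (E : V → V → Prop) (r : V) : Prop :=
  ∃ A ∈ Theta E, (Bmat E r A).rank = (Fintype.card V - 1) * (Fintype.card V - 2)

section AuxLemmas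
lemma rank_eq_card_iff_ker {m n : Type*} [Fintype m] [Fintype n] (M : Matrix m n ℂ) :
    M.rank = Fintype.card n ↔ ∀ v : n → ℂ, M.mulVec v = 0 → v = 0 := by
  have h := LinearMap.finrank_range_add_finrank_ker M.mulVecLin
  rw [Module.finrank_fintype_fun_eq_card] at h
  rw [Matrix.rank]
  constructor
  · intro hr v hv
    have hk : Module.finrank ℂ (LinearMap.ker M.mulVecLin) = 0 := by omega
    rw [Submodule.finrank_eq_zero] at hk
    have hm : v ∈ LinearMap.ker M.mulVecLin := by
      simpa [LinearMap.mem_ker, Matrix.mulVecLin_apply] using hv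
    simpa [hk] using hm
  · intro hv
    have hk : LinearMap.ker M.mulVecLin = ⊥ := by
      rw [LinearMap.ker_eq_bot']
      intro v hvk
      exact hv v (by simpa [Matrix.mulVecLin_apply] using hvk)
    rw [hk, finrank_bot] at h
    omega


lemma sq_sub_self (m : ℕ) : m * m - m = m * (m - 1) := by
  cases m with
  | zero => rfl
  | succ k => rw [Nat.succ_sub_one, Nat.mul_succ, Nat.add_sub_cancel]

lemma card_L {α : Type*} [Fintype α] (r : α) :
    Fintype.card {p : α × α // p.1 ≠ p.2 ∧ p.1 ≠ r ∧ p.2 ≠ r} =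
      (Fintype.card α - 1) * (Fintype.card α - 2) := by
  classical
  set β := {v : α // v ≠ r} with hβ
  have e : {p : α × α // p.1 ≠ p.2 ∧ p.1 ≠ r ∧ p.2 ≠ r} ≃ {q : β × β // q.1 ≠ q.2} :=
    { toFun := fun p => ⟨(⟨p.1.1, p.2.2.1⟩, ⟨p.1.2, p.2.2.2⟩), by
        intro h
        exact p.2.1 (congrArg Subtype.val h)⟩
      invFun := fun q => ⟨(q.1.1.1, q.1.2.1),
        ⟨fun h => q.2 (by exact Subtype.ext h), q.1.1.2, q.1.2.2⟩⟩
      left_inv := fun p => rfl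
      right_inv := fun q => rfl }
  have e2 : {q : β × β // q.1 = q.2} ≃ β :=
    { toFun := fun q => q.1.1
      invFun := fun b => ⟨(b, b), rfl⟩
      left_inv := fun q => by
        obtain ⟨⟨x, y⟩, h⟩ := q
        simp only at h
        subst h
        rfl
      right_inv := fun b => rfl }
  have hdiag : Fintype.card {q : β × β // q.1 = q.2} = Fintype.card β :=
    Fintype.card_congr e2
  rw [Fintype.card_congr e]
  have h1 : Fintype.card {q : β × β // q.1 ≠ q.2} =
      Fintype.card (β × β) - Fintype.card {q : β × β // q.1 = q.2} := by
    have := Fintype.card_subtype_compl (fun q : β × β => q.1 = q.2)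
    simpa using this
  have hβcard : Fintype.card β = Fintype.card α - 1 := by
    have := Fintype.card_subtype_compl (fun v : α => v = r)
    simpa [hβ] using this
  rw [h1, hdiag, Fintype.card_prod, hβcard, sq_sub_self]
  congr 1

lemma mulVec_Bmat [Fintype V] (E : V → V → Prop) (r : V) (A : Matrix V V ℂ)
    (X : Matrix V V ℂ)
    (hsupp : ∀ i j, ¬(i ≠ j ∧ i ≠ r ∧ j ≠ r) → X i j = 0)
    (v : {p : V × V // p.1 ≠ p.2 ∧ p.1 ≠ r ∧ p.2 ≠ r} → ℂ)
    (hv : ∀ ij, v ij = X ij.1.1 ij.1.2)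
    (kl : {p : V × V // p.1 ≠ p.2 ∧ ¬ E p.2 p.1}) :
    (Bmat E r A).mulVec v kl = (A * X - X * A) kl.1.1 kl.1.2 := by
  classical
  obtain ⟨⟨k, l⟩, hkl⟩ := kl
  set g : V × V → ℂ := fun p =>
    if p.1 = k ∧ p.2 = l then A k k - A l l
    else if p.1 = k then -A p.2 l
    else if p.2 = l then A k p.1 else 0 with hg
  have step1 : (Bmat E r A).mulVec v ⟨(k, l), hkl⟩
      = ∑ ij : {p : V × V // p.1 ≠ p.2 ∧ p.1 ≠ r ∧ p.2 ≠ r}, g ij.1 * X ij.1.1 ij.1.2 := by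
    rw [Matrix.mulVec]
    refine Finset.sum_congr rfl fun ij _ => ?_
    rw [hv ij]
    congr 1
  have step2 : (∑ ij : {p : V × V // p.1 ≠ p.2 ∧ p.1 ≠ r ∧ p.2 ≠ r}, g ij.1 * X ij.1.1 ij.1.2)
      = ∑ p : V × V, g p * X p.1 p.2 := by
    rw [← Finset.sum_subtype (Finset.univ.filter
        (fun p : V × V => p.1 ≠ p.2 ∧ p.1 ≠ r ∧ p.2 ≠ r)) (by simp)
        (fun p : V × V => g p * X p.1 p.2)]
    refine Finset.sum_filter_of_ne fun p _ hne => ?_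
    by_contra hP
    exact hne (by rw [hsupp p.1 p.2 hP, mul_zero])
  have key : ∀ p : V × V, g p * X p.1 p.2
      = (if p.2 = l then A k p.1 else 0) * X p.1 p.2
        - X p.1 p.2 * (if p.1 = k then A p.2 l else 0) := by
    rintro ⟨i, j⟩
    by_cases h1 : i = k <;> by_cases h2 : j = l <;> simp [hg, h1, h2] <;> ring
  rw [step1, step2]
  simp only [key]
  rw [Finset.sum_sub_distrib]
  rw [Matrix.sub_apply, Matrix.mul_apply, Matrix.mul_apply]
  congr 1
  · rw [Fintype.sum_prod_type]
    simp [Finset.sum_ite_eq' Finset.univ l]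
  · rw [Fintype.sum_prod_type_right]
    simp [Finset.sum_ite_eq' Finset.univ k, mul_comm]

def KerTriv [Fintype V] (E : V → V → Prop) (r : V) (A : Matrix V V ℂ) : Prop :=
  ∀ X : Matrix V V ℂ, (∀ i j, ¬(i ≠ j ∧ i ≠ r ∧ j ≠ r) → X i j = 0) →
    (∀ k l, k ≠ l → ¬ E l k → (A * X - X * A) k l = 0) → X = 0

lemma hasFullB_iff_kerTriv [Fintype V] (E : V → V → Prop) (r : V) :
    HasFullB E r ↔ ∃ A ∈ Theta E, KerTriv E r A := by
  classical
  unfold HasFullB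
  refine exists_congr fun A => and_congr_right fun _ => ?_
  rw [← card_L r, rank_eq_card_iff_ker]
  constructor
  · intro hinj X hsupp hcomm
    have hv0 : (fun ij : {p : V × V // p.1 ≠ p.2 ∧ p.1 ≠ r ∧ p.2 ≠ r} => X ij.1.1 ij.1.2) = 0 := by
      apply hinj
      funext kl
      rw [mulVec_Bmat E r A X hsupp _ (fun _ => rfl) kl]
      exact hcomm kl.1.1 kl.1.2 kl.2.1 kl.2.2
    funext i j
    by_cases hP : i ≠ j ∧ i ≠ r ∧ j ≠ r
    · exact congrFun hv0 ⟨(i, j), hP⟩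
    · exact hsupp i j hP
  · intro hker v hv
    set X : Matrix V V ℂ := fun i j =>
      if h : i ≠ j ∧ i ≠ r ∧ j ≠ r then v ⟨(i, j), h⟩ else 0 with hX
    have hsupp : ∀ i j, ¬(i ≠ j ∧ i ≠ r ∧ j ≠ r) → X i j = 0 := fun i j h => dif_neg h
    have hvX : ∀ ij, v ij = X ij.1.1 ij.1.2 := by
      rintro ⟨⟨i, j⟩, hij⟩
      simp [hX, dif_pos hij]
    have hX0 : X = 0 := by
      apply hker X hsupp
      intro k l hkl hE
      rw [← mulVec_Bmat E r A X hsupp v hvX ⟨(k, l), hkl, hE⟩, hv]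
      rfl
    funext ij
    rw [hvX ij, hX0]
    rfl

private theorem kerTriv_transfer [Fintype V] [DecidableEq V]
    (E : V → V → Prop) (r : V)
    (E' : Option V → Option V → Prop)
    (hE1 : ∀ a b, E' (some a) (some b) ↔ E a b)
    (hE2 : ∀ a, E' (some a) none ↔ a = r)
    (hE3 : ∀ a, E' none (some a) ↔ a = r) :
    (∃ A' ∈ Theta E', KerTriv E' none A') ↔ (∃ A ∈ Theta E, KerTriv E r A) := by
  constructor
  · -- from G' to G
    rintro ⟨A', hA', hK'⟩
    refine ⟨fun a b => A' (some a) (some b), ?_, ?_⟩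
    · intro i j hij hE
      exact hA' (some i) (some j) (by simpa using hij) (by simpa [hE1] using hE)
    · intro X hsupp hcomm
      set X' : Matrix (Option V) (Option V) ℂ := fun i j =>
        match i, j with
        | some a, some b => X a b
        | _, _ => 0 with hX'
      have hXr : ∀ a, X a r = 0 := fun a => by
        by_cases h : a = r
        · exact hsupp a r (by simp [h])
        · exact hsupp a r (by simp [h])
      have hrX : ∀ b, X r b = 0 := fun b => by
        by_cases h : b = r
        · exact hsupp r b (by simp [h])
        · exact hsupp r b (by simp [h])
      have hsupp' : ∀ i j, ¬(i ≠ j ∧ i ≠ (none : Option V) ∧ j ≠ none) → X' i j = 0 := by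
        rintro (_ | a) (_ | b) h
        · rfl
        · rfl
        · rfl
        · push_neg at h
          have hab : a = b := by
            by_contra hab
            simpa using h (by simpa using hab) (by simp)
          subst hab
          exact hsupp a a (by simp)
      have hX'0 : X' = 0 := by
        apply hK' X' hsupp'
        rintro (_ | k) (_ | l) hkl hE'
        · exact absurd rfl hkl
        · -- (none, some l) : nonedge means ¬E' (some l) none, i.e. l ≠ r
          rw [Matrix.sub_apply, Matrix.mul_apply, Matrix.mul_apply]
          rw [Fintype.sum_option, Fintype.sum_option]
          have h1 : ∀ a : V, A' none (some a) * X' (some a) (some l) = 0 := by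
            intro a
            by_cases har : a = r
            · have he : X' (some a) (some l) = X a l := rfl
              rw [he, har, hrX l, mul_zero]
            · rw [hA' none (some a) (by simp) (fun h => har ((hE2 a).mp h)), zero_mul]
          simp [h1, hX']
          exact Finset.sum_eq_zero fun a _ => h1 a
        · -- (some k, none) : nonedge means ¬E' none (some k), i.e. k ≠ r
          rw [Matrix.sub_apply, Matrix.mul_apply, Matrix.mul_apply]
          rw [Fintype.sum_option, Fintype.sum_option]
          have h1 : ∀ b : V, X' (some k) (some b) * A' (some b) none = 0 := by
            intro b
            by_cases hbr : b = r
            · have he : X' (some k) (some b) = X k b := rfl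
              rw [he, hbr, hXr k, zero_mul]
            · rw [hA' (some b) none (by simp) (fun h => hbr ((hE3 b).mp h)), mul_zero]
          simp [h1, hX']
          exact Finset.sum_eq_zero fun b _ => h1 b
        · -- (some k, some l)
          have hkl' : k ≠ l := by simpa using hkl
          have hElk : ¬ E l k := fun h => hE' ((hE1 l k).mpr h)
          have hc : ∑ j, A' (some k) (some j) * X j l - ∑ j, X k j * A' (some j) (some l) = 0 :=
            hcomm k l hkl' hElk
          rw [Matrix.sub_apply, Matrix.mul_apply, Matrix.mul_apply]
          rw [Fintype.sum_option, Fintype.sum_option]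
          simp only [hX']
          convert hc using 2
          · simp
          · simp
      funext i j
      have := congrFun (congrFun hX'0 (some i)) (some j)
      simpa [hX'] using this
  · -- from G to G'
    rintro ⟨A, hA, hK⟩
    set A' : Matrix (Option V) (Option V) ℂ := fun i j =>
      match i, j with
      | some a, some b => A a b
      | some a, none => if a = r then 1 else 0
      | none, some b => if b = r then 1 else 0
      | none, none => 0 with hA'def
    refine ⟨A', ?_, ?_⟩
    · rintro (_ | a) (_ | b) hij hnE
      · exact absurd rfl hij
      · -- A' none (some b) = 0 when ¬E' (some b) none, i.e. b ≠ r
        show (if b = r then (1:ℂ) else 0) = 0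
        rw [if_neg (fun h => hnE ((hE2 b).mpr h))]
      · show (if a = r then (1:ℂ) else 0) = 0
        rw [if_neg (fun h => hnE ((hE3 a).mpr h))]
      · exact hA a b (by simpa using hij) (by simpa [hE1] using hnE)
    · intro X' hsupp' hcomm'
      have hXd : ∀ i, X' i i = 0 := fun i => hsupp' i i (by simp)
      have hXnr : ∀ j, X' none j = 0 := fun j => hsupp' none j (by simp)
      have hXnc : ∀ i, X' i none = 0 := fun i => hsupp' i none (by simp)
      -- column r vanishes
      have hcol : ∀ a : V, X' (some a) (some r) = 0 := by
        intro a
        by_cases har : a = r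
        · subst har; exact hXd _
        · have hc := hcomm' (some a) none (by simp) (fun h => har ((hE3 a).mp h))
          rw [Matrix.sub_apply, Matrix.mul_apply, Matrix.mul_apply] at hc
          rw [Fintype.sum_option, Fintype.sum_option] at hc
          have h1 : ∀ m : V, A' (some a) (some m) * X' (some m) none = 0 := fun m => by
            rw [hXnc, mul_zero]
          have h2 : ∀ b : V, X' (some a) (some b) * A' (some b) none
              = if b = r then X' (some a) (some r) else 0 := by
            intro b
            show X' (some a) (some b) * (if b = r then (1:ℂ) else 0) = _
            by_cases hbr : b = r
            · subst hbr; simp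
            · simp [hbr]
          rw [Finset.sum_congr rfl (fun m _ => h1 m)] at hc
          rw [Finset.sum_congr rfl (fun b _ => h2 b)] at hc
          simp only [hXnc, hXnr, Finset.sum_ite_eq', Finset.mem_univ, if_true] at hc
          simpa [hA'def] using hc
      have hrow : ∀ b : V, X' (some r) (some b) = 0 := by
        intro b
        by_cases hbr : b = r
        · subst hbr; exact hXd _
        · have hc := hcomm' none (some b) (by simp) (fun h => hbr ((hE2 b).mp h))
          rw [Matrix.sub_apply, Matrix.mul_apply, Matrix.mul_apply] at hc
          rw [Fintype.sum_option, Fintype.sum_option] at hc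
          have h1 : ∀ a : V, A' none (some a) * X' (some a) (some b)
              = if a = r then X' (some r) (some b) else 0 := by
            intro a
            show (if a = r then (1:ℂ) else 0) * X' (some a) (some b) = _
            by_cases har : a = r
            · subst har; simp
            · simp [har]
          rw [Finset.sum_congr rfl (fun a _ => h1 a)] at hc
          simp only [hXnr, hXnc, Finset.sum_ite_eq', Finset.mem_univ, if_true,
            zero_mul, mul_zero, Finset.sum_const_zero] at hc
          simpa [hA'def] using hc
      -- restrict to V
      set X : Matrix V V ℂ := fun a b => X' (some a) (some b) with hXdef
      have hsuppX : ∀ i j, ¬(i ≠ j ∧ i ≠ r ∧ j ≠ r) → X i j = 0 := by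
        intro i j h
        push_neg at h
        by_cases hij : i = j
        · subst hij; exact hXd _
        · rcases (by tauto : i = r ∨ j = r) with h' | h'
          · subst h'; exact hrow j
          · subst h'; exact hcol i
      have hX0 : X = 0 := by
        apply hK X hsuppX
        intro k l hkl hEnl
        have hc := hcomm' (some k) (some l) (by simpa using hkl)
          (fun h => hEnl ((hE1 l k).mp h))
        rw [Matrix.sub_apply, Matrix.mul_apply, Matrix.mul_apply] at hc
        rw [Fintype.sum_option, Fintype.sum_option] at hc
        rw [hXnr, hXnc, mul_zero, zero_mul] at hc
        rw [Matrix.sub_apply, Matrix.mul_apply, Matrix.mul_apply]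
        convert hc using 2 <;> simp [hXdef, hA'def]
      funext i' j'
      match i', j' with
      | some a, some b => exact congrFun (congrFun hX0 a) b
      | some a, none => exact hXnc _
      | none, j' => exact hXnr _

end AuxLemmas

/-- **adding an exchange.** Let `G` be a strongly connected
directed simple graph on a finite vertex type `V` with distinguished vertex
`r`, and let `G'` on `Option V` be obtained from `G` by adding a new vertex
(`none`) joined to `r` by a two-cycle, with `none` as new distinguished
vertex. Then `G'` admits a parameter matrix with `B` of full column rank if
and only if `G` does. -/
theorem add_exchange_fullB_iff [Fintype V] [DecidableEq V]
    (E : V → V → Prop) (hirr : ∀ u, ¬ E u u)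
    (hsc : ∀ u w : V, Relation.ReflTransGen E u w) (r : V)
    (E' : Option V → Option V → Prop)
    (hE1 : ∀ a b, E' (some a) (some b) ↔ E a b)
    (hE2 : ∀ a, E' (some a) none ↔ a = r)
    (hE3 : ∀ a, E' none (some a) ↔ a = r)
    (hE4 : ¬ E' none none) :
    HasFullB E' none ↔ HasFullB E r := by
  rw [hasFullB_iff_kerTriv E' none, hasFullB_iff_kerTriv E r]
  exact kerTriv_transfer E r E' hE1 hE2 hE3
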